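/- For all k ≥ 1 and all M ≥ F_k(F_k(7)), it holds that f_{k+1}(4M) < f_k(f_k(M)). -/

import Mathlib

/-- `towerF k n = 2 ↑^k n`, the Knuth up-arrow tower function with base 2
(for `k ≥ 1`; `towerF 0` is set to `2 ^ n` as well, but is never used). -/
def towerF : ℕ → ℕ → ℕ
  | 0, n => 2 ^ n
  | 1, n => 2 ^ n
  | (k+2), 0 => 1
  | (k+2), (n+1) => towerF (k+1) (towerF (k+2) n)
termination_by k n => (k, n)

/-- `towerFinv k m = 2 ↓^k m`, the largest `b` with `towerF k b ≤ m`. -/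
noncomputable def towerFinv (k m : ℕ) : ℕ :=
  sSup { b : ℕ | towerF k b ≤ m }

lemma towerF_step (k n : ℕ) : towerF (k+2) (n+1) = towerF (k+1) (towerF (k+2) n) := by
  rw [towerF]

lemma towerF_one (n : ℕ) : towerF 1 n = 2 ^ n := by rw [towerF]

lemma towerF_zero' (k : ℕ) : towerF (k+2) 0 = 1 := by rw [towerF]

lemma two_pow_ge (m : ℕ) : m + 1 ≤ 2 ^ m := @Nat.lt_two_pow_self m

lemma two_mul_le_two_pow (m : ℕ) : 2 * m ≤ 2 ^ m := by
  induction m with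
  | zero => simp
  | succ n ih =>
    have h := two_pow_ge n
    calc 2 * (n + 1) = 2 * n + 2 := by ring
    _ ≤ 2 ^ n + 2 ^ n := by omega
    _ = 2 ^ (n + 1) := by ring

lemma towerF_ge_two_pow (k n : ℕ) : 2 ^ n ≤ towerF (k+1) n := by
  induction k generalizing n with
  | zero => rw [towerF_one]
  | succ j ih =>
    induction n with
    | zero => rw [towerF_zero']; simp
    | succ n ihn =>
      rw [towerF_step]
      have ihn' : 2 ^ n ≤ towerF (j+2) n := ihn
      calc 2 ^ (n+1) ≤ 2 ^ (towerF (j+2) n) := by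
            apply Nat.pow_le_pow_right (by norm_num)
            have := two_pow_ge n
            omega
      _ ≤ towerF (j+1) (towerF (j+2) n) := ih _

lemma towerF_double (k n : ℕ) : 2 * towerF (k+1) n ≤ towerF (k+1) (n+1) := by
  cases k with
  | zero => rw [towerF_one, towerF_one]; ring_nf; omega
  | succ j =>
    rw [towerF_step]
    calc 2 * towerF (j+2) n ≤ 2 ^ (towerF (j+2) n) := two_mul_le_two_pow _
    _ ≤ towerF (j+1) (towerF (j+2) n) := towerF_ge_two_pow _ _

lemma towerF_pos (k n : ℕ) : 1 ≤ towerF (k+1) n := by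
  have := towerF_ge_two_pow k n
  have : 1 ≤ 2 ^ n := Nat.one_le_two_pow
  omega

lemma towerF_strictMono (k : ℕ) : StrictMono (towerF (k+1)) := by
  apply strictMono_nat_of_lt_succ
  intro n
  have h1 := towerF_double k n
  have h2 := towerF_pos k n
  omega

lemma towerF_mono (k : ℕ) : Monotone (towerF (k+1)) := (towerF_strictMono k).monotone

lemma lt_towerF (k n : ℕ) : n < towerF (k+1) n := by
  have := towerF_ge_two_pow k n
  have := two_pow_ge n
  omega

lemma towerF_zero (k : ℕ) : towerF (k+1) 0 = 1 := by
  cases k with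
  | zero => rw [towerF_one]; norm_num
  | succ j => rw [towerF_zero']

lemma bddAbove_set (k m : ℕ) : BddAbove { b : ℕ | towerF (k+1) b ≤ m } := by
  refine ⟨m, fun b hb => ?_⟩
  have := lt_towerF k b
  simp only [Set.mem_setOf_eq] at hb
  omega

lemma le_towerFinv (k m b : ℕ) (h : towerF (k+1) b ≤ m) : b ≤ towerFinv (k+1) m :=
  le_csSup (bddAbove_set k m) h

lemma towerF_towerFinv_le (k m : ℕ) (hm : 1 ≤ m) :
    towerF (k+1) (towerFinv (k+1) m) ≤ m := by
  have hne : { b : ℕ | towerF (k+1) b ≤ m }.Nonempty := by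
    refine ⟨0, ?_⟩
    simp only [Set.mem_setOf_eq]
    rw [towerF_zero]
    omega
  have := Nat.sSup_mem hne (bddAbove_set k m)
  exact this

lemma towerFinv_lt (k m c : ℕ) (hm : 1 ≤ m) (h : m < towerF (k+1) c) :
    towerFinv (k+1) m < c := by
  by_contra hcon
  push_neg at hcon
  have h1 : towerF (k+1) c ≤ towerF (k+1) (towerFinv (k+1) m) := towerF_mono k hcon
  have := towerF_towerFinv_le k m hm
  omega

lemma gt_towerF_succ_towerFinv (k m : ℕ) : m < towerF (k+1) (towerFinv (k+1) m + 1) := by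
  by_contra hcon
  push_neg at hcon
  have := le_towerFinv k m _ hcon
  omega

lemma two_pow_ge_add_four (m : ℕ) (hm : 3 ≤ m) : m + 4 ≤ 2 ^ m := by
  induction m with
  | zero => omega
  | succ n ih =>
    rcases Nat.lt_or_ge n 3 with h | h
    · have hn2 : n = 2 := by omega
      subst hn2; norm_num
    · have := ih h
      have : 2 ^ (n+1) = 2 * 2 ^ n := by ring
      omega

/-- Key inequality: `F_{k+1}(n) ≥ 4 · F_k(F_k(n+1)+1)` for `n ≥ 5`, `k ≥ 1`. -/
lemma key_ineq (k n : ℕ) (hn : 5 ≤ n) :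
    4 * towerF (k+1) (towerF (k+1) (n+1) + 1) ≤ towerF (k+2) n := by
  obtain ⟨m, rfl⟩ : ∃ m, n = m + 2 := ⟨n - 2, by omega⟩
  have hm : 3 ≤ m := by omega
  rw [towerF_step, towerF_step]
  set t := towerF (k+2) m with ht
  have htge : m + 4 ≤ t := le_trans (two_pow_ge_add_four m hm) (towerF_ge_two_pow (k+1) m)
  -- F_k(t) ≥ F_k(m+4) ≥ 2 * F_k(m+3) ≥ F_k(m+3) + 3
  have h1 : towerF (k+1) (m+3) + 3 ≤ towerF (k+1) t := by
    have ha : 2 * towerF (k+1) (m+3) ≤ towerF (k+1) (m+4) := towerF_double k (m+3)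
    have hb : towerF (k+1) (m+4) ≤ towerF (k+1) t := towerF_mono k htge
    have hc : 2 ^ (m+3) ≤ towerF (k+1) (m+3) := towerF_ge_two_pow k (m+3)
    have hd : (8:ℕ) ≤ 2 ^ (m+3) := by
      calc (8:ℕ) = 2 ^ 3 := by norm_num
      _ ≤ 2 ^ (m+3) := Nat.pow_le_pow_right (by norm_num) (by omega)
    omega
  -- F_k(F_k t) ≥ F_k(F_k(m+3)+3) ≥ 4 * F_k(F_k(m+3)+1)
  have h2 : towerF (k+1) (towerF (k+1) t) ≥ towerF (k+1) (towerF (k+1) (m+3) + 3) :=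
    towerF_mono k h1
  set s := towerF (k+1) (m+3) + 1 with hs
  have h3 : 2 * towerF (k+1) s ≤ towerF (k+1) (s+1) := towerF_double k s
  have h4 : 2 * towerF (k+1) (s+1) ≤ towerF (k+1) (s+2) := towerF_double k (s+1)
  have h5 : towerF (k+1) (m+3) + 3 = s + 2 := by omega
  rw [h5] at h2
  omega

/-- For `k ≥ 1` and `M ≥ F_k(F_k(7))`, `f_{k+1}(4M) < f_k(f_k(M))`. -/
theorem towerFinv_succ_lt (k : ℕ) (hk : 1 ≤ k) (M : ℕ) (hM : towerF k (towerF k 7) ≤ M) :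
    towerFinv (k + 1) (4 * M) < towerFinv k (towerFinv k M) := by
  obtain ⟨j, rfl⟩ : ∃ j, k = j + 1 := ⟨k - 1, by omega⟩
  set a := towerFinv (j+1) M with ha
  set c := towerFinv (j+1) a with hc
  -- a ≥ F_k 7
  have haF : towerF (j+1) 7 ≤ a := le_towerFinv j M _ hM
  -- c ≥ 7
  have hc7 : 7 ≤ c := le_towerFinv j a 7 haF
  -- F_k(a+1) > M
  have hMa : M < towerF (j+1) (a + 1) := gt_towerF_succ_towerFinv j M
  -- F_k(c+1) > a
  have hac : a < towerF (j+1) (c + 1) := gt_towerF_succ_towerFinv j a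
  -- key
  have hkey : 4 * towerF (j+1) (towerF (j+1) (c+1) + 1) ≤ towerF (j+2) c :=
    key_ineq j c (by omega)
  -- F_k(F_k(c+1)+1) ≥ F_k(a+1) > M
  have h1 : towerF (j+1) (a+1) ≤ towerF (j+1) (towerF (j+1) (c+1) + 1) :=
    towerF_mono j (by omega)
  have h2 : 4 * M < towerF (j+2) c := by omega
  have hM1 : 1 ≤ M := by
    have := towerF_pos j (towerF (j+1) 7)
    omega
  exact towerFinv_lt (j+1) (4 * M) c (by omega) h2
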